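/- The function x ↦ h((1 + √x)/2) is concave on the interval [0,1], where h is the binary entropy function h(p) = -p log p - (1-p) log(1-p). -/

import Mathlib

/-- The binary entropy function (base 2), with `binEnt 0 = binEnt 1 = 0`. -/
noncomputable def binEnt (p : ℝ) : ℝ :=
  -(p * Real.logb 2 p) - (1 - p) * Real.logb 2 (1 - p)

open Real Set

lemma binEnt_continuous : Continuous binEnt := by
  have h : Continuous fun p : ℝ => p * Real.log p := Real.continuous_mul_log
  have h2 : Continuous fun p : ℝ => (1 - p) * Real.log (1 - p) :=
    h.comp (continuous_const.sub continuous_id)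
  have : binEnt = fun p => -((p * Real.log p) / Real.log 2) -
      ((1 - p) * Real.log (1 - p)) / Real.log 2 := by
    funext p
    simp [binEnt, Real.logb, div_eq_mul_inv]; ring
  rw [this]
  fun_prop

/-- derivative of binEnt on (0,1) -/
lemma hasDerivAt_binEnt {p : ℝ} (h0 : 0 < p) (h1 : p < 1) :
    HasDerivAt binEnt ((Real.log (1 - p) - Real.log p) / Real.log 2) p := by
  have hp : p ≠ 0 := ne_of_gt h0
  have hq : (1 : ℝ) - p ≠ 0 := by linarith
  have d1 : HasDerivAt (fun p : ℝ => p * Real.log p) (Real.log p + 1) p := by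
    have := (hasDerivAt_id p).mul (Real.hasDerivAt_log hp)
    simpa [mul_comm, mul_inv_cancel₀ hp] using (show HasDerivAt (fun p : ℝ => p * Real.log p) _ p from this)
  have d2 : HasDerivAt (fun p : ℝ => (1 - p) * Real.log (1 - p))
      (-(Real.log (1 - p) + 1)) p := by
    have inner : HasDerivAt (fun p : ℝ => 1 - p) (-1) p := by
      simpa using (show HasDerivAt (fun x : ℝ => 1 - x) _ p from (hasDerivAt_const p (1:ℝ)).sub (hasDerivAt_id p))
    have := ((hasDerivAt_id (1 - p)).mul (Real.hasDerivAt_log hq)).comp p inner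
    refine this.congr_deriv ?_
    field_simp
    simp only [id_eq]
    ring
  have : HasDerivAt binEnt
      (-((Real.log p + 1) / Real.log 2) - (-(Real.log (1 - p) + 1)) / Real.log 2) p := by
    have e : binEnt = fun p => -((p * Real.log p) / Real.log 2) -
        ((1 - p) * Real.log (1 - p)) / Real.log 2 := by
      funext q
      simp [binEnt, Real.logb, div_eq_mul_inv]; ring
    rw [e]
    exact ((d1.div_const _).neg).sub (d2.div_const _)
  convert this using 1
  ring

/-- Key inequality: `log (1+s) - log (1-s) ≤ 2s/(1-s^2)` for `s ∈ [0,1)`. -/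
lemma key_ineq {s : ℝ} (h0 : 0 ≤ s) (h1 : s < 1) :
    Real.log (1 + s) - Real.log (1 - s) ≤ 2 * s / (1 - s ^ 2) := by
  set u : ℝ → ℝ := fun t => 2 * t / (1 - t ^ 2) - (Real.log (1 + t) - Real.log (1 - t)) with hu
  have deriv_u : ∀ t ∈ Ioo (0:ℝ) 1, HasDerivAt u (4 * t ^ 2 / (1 - t ^ 2) ^ 2) t := by
    intro t ht
    have h1t : (0:ℝ) < 1 + t := by nlinarith [ht.1]
    have h2t : (0:ℝ) < 1 - t := by nlinarith [ht.2]
    have hden : (0:ℝ) < 1 - t ^ 2 := by nlinarith [ht.1, ht.2]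
    have dA : HasDerivAt (fun t : ℝ => 2 * t / (1 - t ^ 2))
        ((2 * (1 - t ^ 2) - 2 * t * (-(2 * t))) / (1 - t ^ 2) ^ 2) t := by
      have hnum : HasDerivAt (fun t : ℝ => 2 * t) 2 t := by
        simpa using (hasDerivAt_id t).const_mul (2:ℝ)
      have hd : HasDerivAt (fun t : ℝ => 1 - t ^ 2) (-(2 * t)) t := by
        have := (hasDerivAt_pow 2 t).const_sub (1:ℝ)
        simpa using this
      exact hnum.div hd (ne_of_gt hden)
    have dB : HasDerivAt (fun t : ℝ => Real.log (1 + t)) ((1 + t)⁻¹) t := by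
      have inner : HasDerivAt (fun t : ℝ => 1 + t) 1 t := by
        simpa using (show HasDerivAt (fun x : ℝ => 1 + x) _ t from (hasDerivAt_const t (1:ℝ)).add (hasDerivAt_id t))
      simpa using (show HasDerivAt (fun x : ℝ => Real.log (1 + x)) _ t from (Real.hasDerivAt_log (ne_of_gt h1t)).comp t inner)
    have dC : HasDerivAt (fun t : ℝ => Real.log (1 - t)) (-(1 - t)⁻¹) t := by
      have inner : HasDerivAt (fun t : ℝ => 1 - t) (-1) t := by
        simpa using (show HasDerivAt (fun x : ℝ => 1 - x) _ t from (hasDerivAt_const t (1:ℝ)).sub (hasDerivAt_id t))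
      have := (Real.hasDerivAt_log (ne_of_gt h2t)).comp t inner
      simpa [mul_comm] using (show HasDerivAt (fun x : ℝ => Real.log (1 - x)) _ t from this)
    have d := dA.sub (dB.sub dC)
    refine d.congr_deriv ?_
    field_simp
    ring
  have hmono : MonotoneOn u (Ico (0:ℝ) 1) := by
    apply monotoneOn_of_deriv_nonneg (convex_Ico 0 1)
    · apply ContinuousOn.sub
      · apply ContinuousOn.div (by fun_prop) (by fun_prop)
        intro t ht
        have : t ^ 2 < 1 := by nlinarith [ht.1, ht.2]
        nlinarith
      · apply ContinuousOn.sub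
        · apply ContinuousOn.log (by fun_prop)
          intro t ht; nlinarith [ht.1]
        · apply ContinuousOn.log (by fun_prop)
          intro t ht; nlinarith [ht.2]
    · rw [interior_Ico]
      intro t ht
      exact (deriv_u t ht).differentiableAt.differentiableWithinAt
    · rw [interior_Ico]
      intro t ht
      rw [(deriv_u t ht).deriv]
      positivity
  rcases eq_or_lt_of_le h0 with h | h
  · simp [← h]
  · have := hmono (left_mem_Ico.2 one_pos) ⟨h0, h1⟩ h0
    simp only [hu] at this
    simp at this
    linarith
noncomputable def psiAux (s : ℝ) : ℝ :=
  (Real.log (1 - s) - Real.log (1 + s)) / (Real.log 2 * (4 * s))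

lemma hasDerivAt_psiAux {s : ℝ} (h0 : 0 < s) (h1 : s < 1) :
    HasDerivAt psiAux
      (((-(1 - s)⁻¹ - (1 + s)⁻¹) * (Real.log 2 * (4 * s)) -
        (Real.log (1 - s) - Real.log (1 + s)) * (Real.log 2 * 4)) /
        (Real.log 2 * (4 * s)) ^ 2) s := by
  have h1t : (0:ℝ) < 1 + s := by linarith
  have h2t : (0:ℝ) < 1 - s := by linarith
  have dB : HasDerivAt (fun t : ℝ => Real.log (1 + t)) ((1 + s)⁻¹) s := by
    have inner : HasDerivAt (fun t : ℝ => 1 + t) 1 s := by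
      simpa using (show HasDerivAt (fun x : ℝ => 1 + x) _ s from (hasDerivAt_const s (1:ℝ)).add (hasDerivAt_id s))
    simpa using (show HasDerivAt (fun x : ℝ => Real.log (1 + x)) _ s from (Real.hasDerivAt_log (ne_of_gt h1t)).comp s inner)
  have dC : HasDerivAt (fun t : ℝ => Real.log (1 - t)) (-(1 - s)⁻¹) s := by
    have inner : HasDerivAt (fun t : ℝ => 1 - t) (-1) s := by
      simpa using (show HasDerivAt (fun x : ℝ => 1 - x) _ s from (hasDerivAt_const s (1:ℝ)).sub (hasDerivAt_id s))
    have := (Real.hasDerivAt_log (ne_of_gt h2t)).comp s inner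
    simpa [mul_comm] using (show HasDerivAt (fun x : ℝ => Real.log (1 - x)) _ s from this)
  have dD : HasDerivAt (fun t : ℝ => Real.log 2 * (4 * t)) (Real.log 2 * 4) s := by
    have : HasDerivAt (fun t : ℝ => Real.log 2 * (4 * t)) (Real.log 2 * (4 * 1)) s := by
      exact (((hasDerivAt_id s).const_mul (4:ℝ)).const_mul (Real.log 2))
    simpa using this
  have hD : Real.log 2 * (4 * s) ≠ 0 := by
    have : (0:ℝ) < Real.log 2 := Real.log_pos (by norm_num)
    positivity
  exact (dC.sub dB).div dD hD

lemma antitone_psiAux : AntitoneOn psiAux (Ioo (0:ℝ) 1) := by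
  apply antitoneOn_of_deriv_nonpos (convex_Ioo 0 1)
  · apply ContinuousOn.div
    · apply ContinuousOn.sub
      · apply ContinuousOn.log (by fun_prop)
        intro t ht; nlinarith [ht.2]
      · apply ContinuousOn.log (by fun_prop)
        intro t ht; nlinarith [ht.1]
    · fun_prop
    · intro t ht
      have : (0:ℝ) < Real.log 2 := Real.log_pos (by norm_num)
      have := ht.1
      positivity
  · rw [interior_Ioo]
    intro t ht
    exact (hasDerivAt_psiAux ht.1 ht.2).differentiableAt.differentiableWithinAt
  · rw [interior_Ioo]
    intro s hs
    rw [(hasDerivAt_psiAux hs.1 hs.2).deriv]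
    apply div_nonpos_of_nonpos_of_nonneg _ (by positivity)
    have hlog2 : (0:ℝ) < Real.log 2 := Real.log_pos (by norm_num)
    have h1t : (0:ℝ) < 1 + s := by linarith [hs.1]
    have h2t : (0:ℝ) < 1 - s := by linarith [hs.2]
    have hden : (0:ℝ) < 1 - s ^ 2 := by nlinarith [hs.1, hs.2]
    have key := key_ineq (le_of_lt hs.1) hs.2
    have e : (-(1 - s)⁻¹ - (1 + s)⁻¹) * (Real.log 2 * (4 * s)) -
        (Real.log (1 - s) - Real.log (1 + s)) * (Real.log 2 * 4) =
        4 * Real.log 2 * ((Real.log (1 + s) - Real.log (1 - s)) - 2 * s / (1 - s ^ 2)) := by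
      field_simp
      ring
    rw [e]
    apply mul_nonpos_of_nonneg_of_nonpos (by positivity)
    linarith

lemma hasDerivAt_g {x : ℝ} (h0 : 0 < x) (h1 : x < 1) :
    HasDerivAt (fun x => binEnt ((1 + Real.sqrt x) / 2)) (psiAux (Real.sqrt x)) x := by
  set s := Real.sqrt x with hs
  have hs0 : 0 < s := Real.sqrt_pos.2 h0
  have hs1 : s < 1 := by
    rw [hs, show (1:ℝ) = Real.sqrt 1 by simp]
    exact Real.sqrt_lt_sqrt (le_of_lt h0) h1
  have hp0 : 0 < (1 + s) / 2 := by linarith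
  have hp1 : (1 + s) / 2 < 1 := by linarith
  have inner : HasDerivAt (fun x : ℝ => (1 + Real.sqrt x) / 2) (1 / (2 * s) / 2) x := by
    exact (((Real.hasDerivAt_sqrt (ne_of_gt h0)).const_add 1).div_const 2)
  have chain := (hasDerivAt_binEnt hp0 hp1).comp x inner
  refine chain.congr_deriv ?_
  have e1 : (1:ℝ) - (1 + s) / 2 = (1 - s) / 2 := by ring
  rw [e1, psiAux, Real.log_div (by linarith) (by norm_num),
    Real.log_div (by linarith) (by norm_num)]
  have hlog2 : Real.log 2 ≠ 0 := ne_of_gt (Real.log_pos (by norm_num))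
  have hs' : s ≠ 0 := ne_of_gt hs0
  field_simp
  ring

theorem concaveOn_binEnt_one_add_sqrt :
    ConcaveOn ℝ (Set.Icc (0 : ℝ) 1) (fun x => binEnt ((1 + Real.sqrt x) / 2)) := by
  apply AntitoneOn.concaveOn_of_deriv (convex_Icc 0 1)
  · exact (binEnt_continuous.comp (by fun_prop)).continuousOn
  · rw [interior_Icc]
    intro x hx
    exact (hasDerivAt_g hx.1 hx.2).differentiableAt.differentiableWithinAt
  · rw [interior_Icc]
    intro a ha b hb hab
    rw [(hasDerivAt_g ha.1 ha.2).deriv, (hasDerivAt_g hb.1 hb.2).deriv]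
    have sa : Real.sqrt a ∈ Ioo (0:ℝ) 1 := by
      constructor
      · exact Real.sqrt_pos.2 ha.1
      · rw [show (1:ℝ) = Real.sqrt 1 by simp]
        exact Real.sqrt_lt_sqrt (le_of_lt ha.1) ha.2
    have sb : Real.sqrt b ∈ Ioo (0:ℝ) 1 := by
      constructor
      · exact Real.sqrt_pos.2 hb.1
      · rw [show (1:ℝ) = Real.sqrt 1 by simp]
        exact Real.sqrt_lt_sqrt (le_of_lt hb.1) hb.2
    exact antitone_psiAux sa sb (Real.sqrt_le_sqrt hab)
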